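/- arXiv:2001.11918 — 9 statements merged into one kernel-verified Lean document; each statement's English description precedes it below -/
import Mathlib

section
/- Let n ≥ 1 and let A be an n×n real matrix all of whose column sums vanish (∑_{i} A_{i k} = 0 for every column k). Then every row of the adjugate of A is a constant vector: adj(A)_{i k} = adj(A)_{i k'} for all indices i, k, k'. Equivalently, the signed cofactor (−1)^{i+k} det(A^{k i}), where A^{k i} denotes A with row k and column i deleted, is independent of k. -/
open Matrix BigOperators

/-- If every column of an `n × n` real matrix sums to zero (a Laplacian-type matrix),
then every row of its adjugate is a constant vector: the signed cofactor
`adj(A) i k = (-1)^(i+k) det(A with row k and column i deleted)` is independent of `k`. -/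
theorem adjugate_row_constant_of_colSums_eq_zero
    (n : ℕ) (hn : 1 ≤ n) (A : Matrix (Fin n) (Fin n) ℝ)
    (hcol : ∀ k : Fin n, ∑ i : Fin n, A i k = 0) :
    ∀ i k k' : Fin n, A.adjugate i k = A.adjugate i k' := by
  intro i k k'
  rcases eq_or_ne k k' with rfl | hkk'
  · rfl
  rw [adjugate_apply, adjugate_apply]
  set B := A.updateRow k (Pi.single i 1) with hB
  set C := A.updateRow k' (Pi.single i 1) with hC
  set D := B.updateRow k' (A k) with hD
  have hsum : ∑ j : Fin n, A j = 0 := by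
    funext c
    exact (Finset.sum_apply c Finset.univ (fun j => A j)).trans (hcol c)
  -- D is C with rows k and k' swapped
  have hDC : D = C.submatrix (Equiv.swap k k') id := by
    funext a b
    rcases eq_or_ne a k with rfl | hak
    · simp [hD, hC, hB, hkk', Equiv.swap_apply_left, updateRow_apply, hkk'.symm]
    rcases eq_or_ne a k' with rfl | hak'
    · simp [hD, hC, Equiv.swap_apply_right, updateRow_apply, hkk'.symm, hkk']
    · simp [hD, hC, hB, Equiv.swap_apply_of_ne_of_ne hak hak', updateRow_apply, hak, hak']
  have hdetDC : D.det = -C.det := by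
    rw [hDC]
    have := Matrix.det_permute (Equiv.swap k k') C
    simpa [Equiv.Perm.sign_swap hkk', Matrix.submatrix] using this
  -- B is D with row k' replaced by A k' = -A k - (sum of other rows)
  have hs : k ∉ ((Finset.univ.erase k').erase k : Finset (Fin n)) := by simp
  have key := Matrix.det_updateRow_sum_aux (j := k') D ((Finset.univ.erase k').erase k)
    (by simp) (fun _ => (-1 : ℝ)) (-1 : ℝ)
  have hrow : (-1 : ℝ) • D k' + ∑ j ∈ (Finset.univ.erase k').erase k, (-1 : ℝ) • D j
      = A k' := by
    have hDk' : D k' = A k := by simp [hD]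
    have hDj : ∀ j ∈ (Finset.univ.erase k').erase k, D j = A j := by
      intro j hj
      simp only [Finset.mem_erase, Finset.mem_univ, and_true] at hj
      simp [hD, hB, updateRow_apply, hj.1, hj.2]
    rw [hDk', Finset.sum_congr rfl (fun j hj => by rw [hDj j hj])]
    have e1 : A k + ∑ j ∈ (Finset.univ.erase k').erase k, A j
        = ∑ j ∈ Finset.univ.erase k', A j :=
      Finset.add_sum_erase _ A (Finset.mem_erase.mpr ⟨hkk', Finset.mem_univ k⟩)
    have e2 : A k' + ∑ j ∈ Finset.univ.erase k', A j = ∑ j, A j :=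
      Finset.add_sum_erase _ A (Finset.mem_univ k')
    have h0 : (A k + A k') + ∑ j ∈ (Finset.univ.erase k').erase k, A j = 0 := by
      have hz : A k' + (A k + ∑ j ∈ (Finset.univ.erase k').erase k, A j) = 0 := by
        rw [e1, e2, hsum]
      rw [← hz]; abel
    have h2 : ∑ j ∈ (Finset.univ.erase k').erase k, A j = -A k - A k' := by
      rw [sub_eq_add_neg, ← neg_add]
      exact eq_neg_of_add_eq_zero_right h0
    have hns : ∑ j ∈ (Finset.univ.erase k').erase k, (-1 : ℝ) • A j
        = -∑ j ∈ (Finset.univ.erase k').erase k, A j := by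
      simp only [neg_one_smul]; exact Finset.sum_neg_distrib _
    rw [hns, h2]
    module
  have hBD : B = D.updateRow k' ((-1 : ℝ) • D k' + ∑ j ∈ (Finset.univ.erase k').erase k,
      (-1 : ℝ) • D j) := by
    rw [hrow, hD]
    funext a b
    rcases eq_or_ne a k' with rfl | hak'
    · simp [hB, updateRow_apply, hkk'.symm]
    · simp [updateRow_apply, hak']
  calc B.det = (-1 : ℝ) • D.det := by rw [hBD]; exact key
    _ = C.det := by rw [hdetDC]; simp
end

section
/- Let A be an n×n real matrix with all column sums zero. For an index i, let A^{0i} denote the n×(n−1) matrix obtained from A by deleting column i, and let A^{k i} denote the (n−1)×(n−1) matrix obtained by deleting row k and column i. Then for every row index k, det((A^{0i})ᵀ · A^{0i}) = n · (det A^{k i})². -/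
open Matrix BigOperators

/-- A square matrix all of whose columns sum to zero has determinant zero. -/
lemma det_eq_zero_of_col_sums_zero {m : ℕ} (X : Matrix (Fin m.succ) (Fin m.succ) ℝ)
    (h : ∀ j, ∑ k, X k j = 0) : X.det = 0 := by
  rw [← Matrix.det_transpose]
  rw [← Matrix.exists_mulVec_eq_zero_iff]
  refine ⟨fun _ => 1, ?_, ?_⟩
  · intro hc
    have := congrFun hc 0
    simp at this
  · funext j
    simpa [Matrix.mulVec, dotProduct] using h j

/-- For an `(n+1) × (n+1)` real matrix `A` with zero column sums, the Gram determinant of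
the matrix `A⁰ⁱ` obtained by deleting column `i` equals `n+1` times the square of the
determinant of the matrix obtained by deleting row `k` and column `i`, for every row `k`. -/
theorem gram_det_of_delete_col_eq_card_mul_sq_cofactor
    (n : ℕ) (A : Matrix (Fin (n + 1)) (Fin (n + 1)) ℝ)
    (hcol : ∀ k : Fin (n + 1), ∑ i : Fin (n + 1), A i k = 0)
    (i : Fin (n + 1)) :
    ∀ k : Fin (n + 1),
      ((A.submatrix id i.succAbove)ᵀ * A.submatrix id i.succAbove).det
        = ((n : ℝ) + 1) * ((A.submatrix k.succAbove i.succAbove).det) ^ 2 := by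
  intro k
  set B := A.submatrix id i.succAbove with hB
  set D := A.updateCol i (fun _ => (1:ℝ)) with hD
  set M : Fin (n+1) → Matrix (Fin (n+1)) (Fin (n+1)) ℝ :=
    fun l => A.updateCol i (Pi.single l 1) with hM
  -- all `det (M l)` are equal
  have hMeq : ∀ l l' : Fin (n+1), (M l).det = (M l').det := by
    intro l l'
    have hz : (A.updateCol i (Pi.single l 1 - Pi.single l' 1)).det = 0 := by
      apply det_eq_zero_of_col_sums_zero
      intro j
      by_cases hj : j = i
      · subst hj
        simp [Matrix.updateCol_apply, Pi.single_apply, Finset.sum_sub_distrib]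
      · simpa [Matrix.updateCol_apply, hj] using hcol j
    have := Matrix.det_updateCol_add A i (Pi.single l 1 - Pi.single l' 1) (Pi.single l' 1)
    simp only [sub_add_cancel] at this
    rw [hM]
    simp only [this, hz, zero_add]
  -- det D = (n+1) * det (M k)
  have hone : (fun _ : Fin (n+1) => (1:ℝ)) = ∑ l : Fin (n+1), Pi.single l 1 := by
    funext x
    simp [Pi.single_apply, Finset.sum_apply]
  have hzero : ∀ w : Fin (n+1) → ℝ, (∑ x, w x = 0) → (A.updateCol i w).det = 0 := by
    intro w hw
    apply det_eq_zero_of_col_sums_zero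
    intro j
    by_cases hj : j = i
    · subst hj; simpa [Matrix.updateCol_apply] using hw
    · simpa [Matrix.updateCol_apply, hj] using hcol j
  have hDsum : D.det = ∑ l : Fin (n+1), (M l).det := by
    rw [hD, hone]
    induction (Finset.univ : Finset (Fin (n+1))) using Finset.induction_on with
    | empty =>
        simp only [Finset.sum_empty]
        exact hzero 0 (by simp)
    | insert _ _ hx ih =>
        rw [Finset.sum_insert hx, Matrix.det_updateCol_add, ih, Finset.sum_insert hx]
  have hDval : D.det = ((n:ℝ)+1) * (M k).det := by
    rw [hDsum]
    rw [Finset.sum_congr rfl (fun l _ => hMeq l k)]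
    simp [mul_comm]
  -- det (M k) relates to the minor
  have hsub : ∀ l : Fin (n+1),
      (M l).submatrix l.succAbove i.succAbove = A.submatrix l.succAbove i.succAbove := by
    intro l
    ext p q
    simp [hM, Matrix.updateCol_apply, Fin.succAbove_ne i q]
  have hMk : (M k).det = (-1:ℝ)^(k+i : ℕ) * (A.submatrix k.succAbove i.succAbove).det := by
    rw [Matrix.det_succ_column (M k) i]
    rw [Finset.sum_eq_single k]
    · rw [hsub k]
      simp [hM, Matrix.updateCol_apply]
    · intro b _ hb
      simp [hM, Matrix.updateCol_apply, Pi.single_apply, hb]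
    · simp
  -- the Gram matrix of D
  have hDtD : (Dᵀ * D).det = ((n:ℝ)+1) * (Bᵀ * B).det := by
    rw [Matrix.det_succ_column (Dᵀ * D) i]
    have hcolD : ∀ p : Fin (n+1), (Dᵀ * D) p i = if p = i then (n:ℝ)+1 else 0 := by
      intro p
      by_cases hp : p = i
      · subst hp
        simp [Matrix.mul_apply, hD, Matrix.updateCol_apply]
      · have : (Dᵀ * D) p i = ∑ m, A m p := by
          simp [Matrix.mul_apply, hD, Matrix.updateCol_apply, hp]
        rw [this, hcol p, if_neg hp]
    have hsubG : (Dᵀ * D).submatrix i.succAbove i.succAbove = Bᵀ * B := by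
      ext p q
      simp [Matrix.mul_apply, hD, hB, Matrix.updateCol_apply, Fin.succAbove_ne i p,
        Fin.succAbove_ne i q]
    rw [Finset.sum_eq_single i]
    · rw [hsubG, hcolD i]
      simp
    · intro b _ hb
      rw [hcolD b, if_neg hb]
      ring
    · simp
  -- combine
  have hBtB : Bᵀ * B = (A.submatrix id i.succAbove)ᵀ * A.submatrix id i.succAbove := rfl
  have hsq : (Dᵀ * D).det = D.det * D.det := by
    rw [Matrix.det_mul, Matrix.det_transpose]
  have hpos : ((n:ℝ)+1) ≠ 0 := by positivity
  have : ((n:ℝ)+1) * (Bᵀ * B).det = (((n:ℝ)+1) * (M k).det) * (((n:ℝ)+1) * (M k).det) := by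
    rw [← hDtD, hsq, hDval]
  have h2 : (Bᵀ * B).det = ((n:ℝ)+1) * ((M k).det)^2 := by
    field_simp at this ⊢
    nlinarith [this]
  rw [← hBtB, h2, hMk]
  rw [mul_pow]
  rw [← pow_mul, pow_mul']
  simp
end

section
/- Let A be an n×n real matrix with columns v₁, …, vₙ ∈ ℝⁿ, let i ≠ j be two column indices, let W be the linear span of the remaining columns {v_l : l ≠ i, l ≠ j}, and let P denote the orthogonal projection of ℝⁿ onto W. Then √(det((A^{0i})ᵀ A^{0i})) · ‖v_i − P v_i‖ = √(det((A^{0j})ᵀ A^{0j})) · ‖v_j − P v_j‖, where A^{0k} denotes A with column k deleted and ‖·‖ is the Euclidean norm. -/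
open Matrix BigOperators
open scoped RealInnerProductSpace

section BaseHeightAux

variable {E : Type*} [NormedAddCommGroup E] [InnerProductSpace ℝ E]

/-- The Gram matrix of a finite family of vectors. -/
noncomputable def baseHeightGram {ι : Type*} [Fintype ι] (u : ι → E) : Matrix ι ι ℝ :=
  Matrix.of fun a b => ⟪u a, u b⟫

lemma baseHeightGram_comp {ι κ : Type*} [Fintype ι] [Fintype κ] (u : ι → E) (g : κ → ι) :
    baseHeightGram (u ∘ g) = (baseHeightGram u).submatrix g g := rfl

lemma baseHeightGram_transform {m : ℕ} (u : Fin m → E) (T : Matrix (Fin m) (Fin m) ℝ) :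
    baseHeightGram (fun a => ∑ c, T c a • u c) = Tᵀ * (baseHeightGram u * T) := by
  ext a b
  simp only [baseHeightGram, Matrix.of_apply, Matrix.mul_apply, Matrix.transpose_apply,
    sum_inner, inner_sum, real_inner_smul_left, real_inner_smul_right, Finset.mul_sum,
    Finset.sum_mul]
  rw [Finset.sum_comm]
  congr 1; ext c; congr 1; ext d; ring

/-- Base–height expansion of the Gram determinant: the Gram determinant of a family equals
the Gram determinant of the tail times the squared distance of the head from the span of
the tail. -/
lemma baseHeightGram_det_cons {m : ℕ} [FiniteDimensional ℝ E] (u : Fin (m + 1) → E) :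
    (baseHeightGram u).det = (baseHeightGram (u ∘ Fin.succ)).det *
      ‖u 0 - (Submodule.orthogonalProjection (Submodule.span ℝ (Set.range (u ∘ Fin.succ))) (u 0) : E)‖ ^ 2 := by
  set W := Submodule.span ℝ (Set.range (u ∘ Fin.succ)) with hWdef
  set p : E := (Submodule.orthogonalProjection W (u 0) : E) with hp
  set r : E := u 0 - p with hr
  have hpW : p ∈ W := (Submodule.orthogonalProjection W (u 0)).2
  obtain ⟨c, hc⟩ := Submodule.mem_span_range_iff_exists_fun ℝ |>.mp hpW
  have hrperp : ∀ w ∈ W, ⟪r, w⟫ = 0 := by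
    intro w hw
    have := Submodule.sub_starProjection_mem_orthogonal (K := W) (u 0)
    rw [real_inner_comm]
    exact (Submodule.mem_orthogonal W r).mp this w hw
  -- the modified family
  set u' : Fin (m + 1) → E := Fin.cons r (u ∘ Fin.succ) with hu'
  -- the unipotent transform
  set T : Matrix (Fin (m + 1)) (Fin (m + 1)) ℝ :=
    Matrix.of fun a b => if b = 0 then (Fin.cons 1 c : Fin (m + 1) → ℝ) a else if a = b then 1 else 0 with hT
  have hTu : ∀ a, u a = ∑ cc, T cc a • u' cc := by
    intro a
    induction a using Fin.cases with
    | zero =>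
        have hsum : ∑ cc, T cc 0 • u' cc = r + p := by
          rw [Fin.sum_univ_succ]
          simp only [hT, Matrix.of_apply, if_pos rfl, Fin.cons_zero, Fin.cons_succ, hu',
            if_true, one_smul]
          rw [show ∑ i : Fin m, c i • (u ∘ Fin.succ) i = p from hc]
        rw [hsum, hr]; abel
    | succ k =>
        rw [Finset.sum_eq_single (Fin.succ k)]
        · simp [hT, hu', Fin.succ_ne_zero]
        · intro b _ hb
          have hb0 : (Fin.succ k : Fin (m+1)) ≠ 0 := Fin.succ_ne_zero k
          simp [hT, hb0, hb]
        · simp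
  have hgram : baseHeightGram u = Tᵀ * (baseHeightGram u' * T) := by
    rw [show u = fun a => ∑ cc, T cc a • u' cc from funext hTu]
    exact baseHeightGram_transform u' T
  have hdetT : T.det = 1 := by
    have : T.BlockTriangular OrderDual.toDual := by
      intro a b hab
      have hb0 : b ≠ 0 := by
        intro h; subst h; exact absurd (Fin.zero_le a) (not_le.mpr hab)
      have hab' : a < b := hab
      simp only [hT, Matrix.of_apply, if_neg hb0, if_neg (ne_of_lt hab')]
    rw [Matrix.det_of_lowerTriangular T this]
    have : ∀ a : Fin (m+1), T a a = 1 := by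
      intro a
      rcases eq_or_ne a 0 with h | h
      · subst h; simp [hT]
      · simp [hT, if_neg h]
    simp [this]
  -- det of gram u'
  have hmem : ∀ k : Fin m, u (Fin.succ k) ∈ W := fun k =>
    Submodule.subset_span ⟨k, rfl⟩
  have hdet' : (baseHeightGram u').det = ‖r‖ ^ 2 * (baseHeightGram (u ∘ Fin.succ)).det := by
    rw [Matrix.det_succ_row_zero]
    rw [Finset.sum_eq_single 0]
    · have h00 : baseHeightGram u' 0 0 = ‖r‖ ^ 2 := by
        simp [baseHeightGram, hu', real_inner_self_eq_norm_sq]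
      have hsub : (baseHeightGram u').submatrix Fin.succ (Fin.succAbove 0)
          = baseHeightGram (u ∘ Fin.succ) := by
        ext a b
        simp [baseHeightGram, hu', Fin.succAbove, Fin.succ_ne_zero]
      rw [h00, hsub]
      simp
    · intro b _ hb
      have : baseHeightGram u' 0 b = 0 := by
        obtain ⟨k, rfl⟩ := Fin.exists_succ_eq.mpr hb
        have : ⟪r, u (Fin.succ k)⟫ = 0 := hrperp _ (hmem k)
        simpa [baseHeightGram, hu'] using this
      simp [this]
    · simp
  rw [hgram, Matrix.det_mul, Matrix.det_mul, Matrix.det_transpose, hdetT, hdet']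
  ring

lemma baseHeightGram_col {N : Type*} [Fintype N] [DecidableEq N] {ι : Type*} [Fintype ι]
    (A : Matrix N N ℝ) (f : ι → N) (v : N → EuclideanSpace ℝ N) (hv : ∀ l r, v l r = A r l) :
    (A.submatrix id f)ᵀ * A.submatrix id f = baseHeightGram (v ∘ f) := by
  ext a b
  simp [baseHeightGram, Matrix.mul_apply, PiLp.inner_apply, hv, RCLike.inner_apply,
    conj_trivial]
  exact Finset.sum_congr rfl fun _ _ => mul_comm _ _

/-- Range of the reindexing map that puts column `j` first among the columns other than `i`. -/
lemma baseHeight_range_aux {m : ℕ} (i j : Fin (m + 2)) (k : Fin (m + 1))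
    (hk : i.succAbove k = j) :
    Set.range ((i.succAbove ∘ (Equiv.swap (0 : Fin (m + 1)) k)) ∘ Fin.succ)
      = {l | l ≠ i ∧ l ≠ j} := by
  ext l
  simp only [Set.mem_range, Function.comp_apply, Set.mem_setOf_eq]
  constructor
  · rintro ⟨y, rfl⟩
    refine ⟨Fin.succAbove_ne i _, fun h => ?_⟩
    rw [← hk] at h
    have := Fin.succAbove_right_injective (p := i) h
    have h2 : Equiv.swap (0 : Fin (m+1)) k y.succ = Equiv.swap (0 : Fin (m+1)) k 0 := by
      rw [this, Equiv.swap_apply_left]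
    exact Fin.succ_ne_zero y ((Equiv.swap _ _).injective h2)
  · rintro ⟨hli, hlj⟩
    obtain ⟨x, hx⟩ := Fin.exists_succAbove_eq hli
    have hxk : x ≠ k := fun h => hlj (by rw [← hx, h, hk])
    have hex0 : Equiv.swap (0 : Fin (m+1)) k x ≠ 0 := by
      intro h
      have h2 : Equiv.swap (0 : Fin (m+1)) k x = Equiv.swap (0 : Fin (m+1)) k k := by
        rw [h, Equiv.swap_apply_right]
      exact hxk ((Equiv.swap _ _).injective h2)
    obtain ⟨y, hy⟩ := Fin.exists_succ_eq.mpr hex0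
    refine ⟨y, ?_⟩
    rw [hy, Equiv.swap_apply_self, hx]

/-- One half of the base–height symmetry: the Gram determinant of the columns other than `i`
factors as the Gram determinant of the common base times the squared residual of column `j`. -/
lemma baseHeight_half {m : ℕ} (A : Matrix (Fin (m + 2)) (Fin (m + 2)) ℝ)
    (i j : Fin (m + 2)) (hij : i ≠ j)
    (v : Fin (m + 2) → EuclideanSpace ℝ (Fin (m + 2))) (hv : ∀ l r, v l r = A r l) :
    ∃ f : Fin m → Fin (m + 2), Function.Injective f ∧
      Set.range f = {l | l ≠ i ∧ l ≠ j} ∧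
      ((A.submatrix id i.succAbove)ᵀ * A.submatrix id i.succAbove).det
        = (baseHeightGram (v ∘ f)).det *
          ‖v j - (Submodule.orthogonalProjection (Submodule.span ℝ (v '' {l | l ≠ i ∧ l ≠ j})) (v j)
            : EuclideanSpace ℝ (Fin (m + 2)))‖ ^ 2 := by
  obtain ⟨k, hk⟩ := Fin.exists_succAbove_eq hij.symm
  set e := Equiv.swap (0 : Fin (m + 1)) k with he
  set g : Fin (m + 1) → Fin (m + 2) := i.succAbove ∘ e with hg
  have hrg : Set.range (g ∘ Fin.succ) = {l | l ≠ i ∧ l ≠ j} := by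
    rw [hg]; exact baseHeight_range_aux i j k hk
  refine ⟨g ∘ Fin.succ,
    ((Fin.succAbove_right_injective).comp e.injective).comp (Fin.succ_injective _),
    hrg, ?_⟩
  rw [baseHeightGram_col A i.succAbove v hv]
  have h1 : (baseHeightGram (v ∘ i.succAbove)).det = (baseHeightGram (v ∘ g)).det := by
    have hvg : v ∘ g = (v ∘ i.succAbove) ∘ e := rfl
    rw [hvg, show baseHeightGram ((v ∘ i.succAbove) ∘ ⇑e)
        = (baseHeightGram (v ∘ i.succAbove)).submatrix e e from rfl,
      Matrix.det_submatrix_equiv_self]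
  rw [h1]
  have h2 := baseHeightGram_det_cons (v ∘ g)
  have hg0 : (v ∘ g) 0 = v j := by
    simp only [hg, Function.comp_apply, he, Equiv.swap_apply_left, hk]
  have hrange : Set.range ((v ∘ g) ∘ Fin.succ) = v '' {l | l ≠ i ∧ l ≠ j} := by
    rw [show (v ∘ g) ∘ Fin.succ = v ∘ (g ∘ Fin.succ) from rfl, Set.range_comp,
      hrg]
  rw [hrange, hg0] at h2
  exact h2

end BaseHeightAux

/-- Base–height formula: for an `(n+1) × (n+1)` real matrix `A` with columns `v l`, two
distinct column indices `i ≠ j`, and `P` the orthogonal projection onto the span `W` of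
the remaining columns, the `(n)`-dimensional parallelotope volume
`√(det((A⁰ⁱ)ᵀ A⁰ⁱ))` times the residual norm `‖v i - P (v i)‖` is symmetric in `i, j`. -/
theorem base_height_symmetry
    (n : ℕ) (A : Matrix (Fin (n + 1)) (Fin (n + 1)) ℝ)
    (i j : Fin (n + 1)) (hij : i ≠ j)
    (v : Fin (n + 1) → EuclideanSpace ℝ (Fin (n + 1)))
    (hv : ∀ l r, v l r = A r l)
    (W : Submodule ℝ (EuclideanSpace ℝ (Fin (n + 1))))
    (hW : W = Submodule.span ℝ (v '' {l | l ≠ i ∧ l ≠ j})) :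
    Real.sqrt (((A.submatrix id i.succAbove)ᵀ * A.submatrix id i.succAbove).det)
        * ‖v i - (Submodule.orthogonalProjection W (v i) : EuclideanSpace ℝ (Fin (n + 1)))‖
      = Real.sqrt (((A.submatrix id j.succAbove)ᵀ * A.submatrix id j.succAbove).det)
        * ‖v j - (Submodule.orthogonalProjection W (v j) : EuclideanSpace ℝ (Fin (n + 1)))‖ := by
  subst hW
  rcases n with _ | m
  · have h1 := i.isLt
    have h2 := j.isLt
    exact absurd (Fin.ext (by omega)) hij
  obtain ⟨f, hfinj, hfr, hf⟩ := baseHeight_half A i j hij v hv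
  obtain ⟨g, hginj, hgr, hg⟩ := baseHeight_half A j i hij.symm v hv
  have hset : {l | l ≠ j ∧ l ≠ i} = {l : Fin (m + 2) | l ≠ i ∧ l ≠ j} := by
    ext l; simp [and_comm]
  rw [hset] at hgr hg
  have hfg : (baseHeightGram (v ∘ g)).det = (baseHeightGram (v ∘ f)).det := by
    have hrfg : Set.range g = Set.range f := hgr.trans hfr.symm
    set σ : Fin m ≃ Fin m :=
      (Equiv.ofInjective g hginj).trans
        ((Equiv.setCongr hrfg).trans (Equiv.ofInjective f hfinj).symm) with hσ
    have hfσ : v ∘ g = (v ∘ f) ∘ σ := by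
      funext x
      have hfs : f (σ x) = g x :=
        Equiv.apply_ofInjective_symm hfinj
          ((Equiv.setCongr hrfg) ((Equiv.ofInjective g hginj) x))
      simp only [Function.comp_apply, hfs]
    rw [hfσ, show baseHeightGram ((v ∘ f) ∘ ⇑σ)
        = (baseHeightGram (v ∘ f)).submatrix σ σ from rfl,
      Matrix.det_submatrix_equiv_self]
  rw [hf, hg, hfg]
  rw [Real.sqrt_mul' _ (sq_nonneg _), Real.sqrt_mul' _ (sq_nonneg _),
    Real.sqrt_sq (norm_nonneg _), Real.sqrt_sq (norm_nonneg _)]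
  ring
end

section
/- Let S be an n×m real matrix of rank m (full column rank), so that SᵀS is invertible. Then ‖S(SᵀS)⁻¹Sᵀ − S Sᵀ‖_F = ‖I_m − SᵀS‖_F, where ‖·‖_F denotes the Frobenius norm, I_m the m×m identity matrix, and S(SᵀS)⁻¹Sᵀ the matrix of the orthogonal projection onto the column span of S. -/
open Matrix BigOperators

/-- The Frobenius norm of a real matrix: `‖M‖_F = √(∑ i j, (M i j)²)`. -/
noncomputable def frobeniusNorm {n m : ℕ} (M : Matrix (Fin n) (Fin m) ℝ) : ℝ :=
  Real.sqrt (∑ i, ∑ j, (M i j) ^ 2)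

lemma sum_sq_eq_trace {n m : ℕ} (M : Matrix (Fin n) (Fin m) ℝ) :
    ∑ i, ∑ j, (M i j) ^ 2 = (Mᵀ * M).trace := by
  simp only [Matrix.trace, Matrix.diag, Matrix.mul_apply, Matrix.transpose_apply, sq]
  exact Finset.sum_comm

/-- For an `n × m` real matrix `S` of full column rank (so `Sᵀ S` is invertible), the
Frobenius norm of the difference between the true orthogonal projection `S (SᵀS)⁻¹ Sᵀ`
onto the column span of `S` and the approximate projection `S Sᵀ` equals the Frobenius
norm of `I - Sᵀ S`. -/
theorem frobenius_norm_projection_difference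
    (n m : ℕ) (S : Matrix (Fin n) (Fin m) ℝ) (hrank : S.rank = m) :
    frobeniusNorm (S * (Sᵀ * S)⁻¹ * Sᵀ - S * Sᵀ)
      = frobeniusNorm ((1 : Matrix (Fin m) (Fin m) ℝ) - Sᵀ * S) := by
  set G : Matrix (Fin m) (Fin m) ℝ := Sᵀ * S with hGdef
  -- G is invertible
  have hGrank : G.rank = m := by rw [hGdef, Matrix.rank_transpose_mul_self, hrank]
  have hGunit : IsUnit G := by
    rw [← Matrix.mulVec_surjective_iff_isUnit]
    have htop : LinearMap.range G.mulVecLin = ⊤ := by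
      apply Submodule.eq_top_of_finrank_eq
      rw [← Matrix.rank, hGrank]
      simp [Module.finrank_pi]
    intro v
    have := htop ▸ Submodule.mem_top (x := v) (R := ℝ)
    obtain ⟨w, hw⟩ := this
    exact ⟨w, hw⟩
  have hdet : IsUnit G.det := (Matrix.isUnit_iff_isUnit_det G).mp hGunit
  have hGsym : Gᵀ = G := by rw [hGdef, Matrix.transpose_mul, Matrix.transpose_transpose]
  have hBsym : (G⁻¹)ᵀ = G⁻¹ := by rw [Matrix.transpose_nonsing_inv, hGsym]
  have hinv : G⁻¹ * G = 1 := Matrix.nonsing_inv_mul G hdet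
  set B : Matrix (Fin m) (Fin m) ℝ := G⁻¹ - 1 with hBdef
  have hBsym' : Bᵀ = B := by rw [hBdef, Matrix.transpose_sub, hBsym, Matrix.transpose_one]
  have hBG : B * G = 1 - G := by rw [hBdef, Matrix.sub_mul, hinv, Matrix.one_mul]
  have hA : S * (Sᵀ * S)⁻¹ * Sᵀ - S * Sᵀ = S * B * Sᵀ := by
    rw [hBdef, Matrix.mul_sub, Matrix.sub_mul, Matrix.mul_one, ← hGdef]
  rw [hA]
  unfold frobeniusNorm
  rw [sum_sq_eq_trace, sum_sq_eq_trace]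
  congr 1
  have h1 : (S * B * Sᵀ)ᵀ * (S * B * Sᵀ) = S * (B * G * B) * Sᵀ := by
    simp only [Matrix.transpose_mul, Matrix.transpose_transpose, hBsym', hGdef]
    simp only [Matrix.mul_assoc]
  have h2 : ((1 : Matrix (Fin m) (Fin m) ℝ) - G)ᵀ * (1 - G) = (1 - G) * (1 - G) := by
    rw [Matrix.transpose_sub, Matrix.transpose_one, hGsym]
  rw [h1, h2]
  calc (S * (B * G * B) * Sᵀ).trace
      = ((B * G * B) * Sᵀ * S).trace := by
        rw [Matrix.mul_assoc, Matrix.trace_mul_comm, Matrix.mul_assoc]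
    _ = ((1 - G) * (1 - G)).trace := by
        rw [← hBG, hGdef]
        simp only [Matrix.mul_assoc]
end

section
/- Let S be an n×m real matrix of rank m (so SᵀS is invertible) and let v ∈ ℝⁿ. Then ‖S(SᵀS)⁻¹Sᵀ v − S Sᵀ v‖ ≤ ‖I_m − SᵀS‖_F · ‖v‖, where the vector norms are Euclidean, ‖·‖_F is the Frobenius norm, and I_m is the m×m identity. In words: the difference between the true orthogonal projection of v onto the column span of S and the approximate projection S Sᵀ v (exact when the columns of S are orthonormal) is bounded by ‖I_m − SᵀS‖_F times ‖v‖. -/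
open Matrix BigOperators

/-- For an `n × m` real matrix `S` of full column rank and any vector `v`, the Euclidean
distance between the true orthogonal projection `S (SᵀS)⁻¹ Sᵀ v` of `v` onto the column
span of `S` and the approximate projection `S Sᵀ v` is bounded by
`‖I - Sᵀ S‖_F · ‖v‖`. -/
theorem projection_approximation_bound
    (n m : ℕ) (S : Matrix (Fin n) (Fin m) ℝ) (hrank : S.rank = m)
    (v : Fin n → ℝ) :
    Real.sqrt (∑ r, ((S * (Sᵀ * S)⁻¹ * Sᵀ).mulVec v r - (S * Sᵀ).mulVec v r) ^ 2)
      ≤ frobeniusNorm ((1 : Matrix (Fin m) (Fin m) ℝ) - Sᵀ * S)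
        * Real.sqrt (∑ r, (v r) ^ 2) := by
  classical
  set A : Matrix (Fin m) (Fin m) ℝ := Sᵀ * S with hAdef
  have hAherm : A.IsHermitian := isHermitian_conjTranspose_mul_self S
  set d := hAherm.eigenvalues with hd
  set U : Matrix (Fin m) (Fin m) ℝ := (hAherm.eigenvectorUnitary : Matrix (Fin m) (Fin m) ℝ) with hU
  have hstar : star U = Uᵀ := by
    rw [Matrix.star_eq_conjTranspose, Matrix.conjTranspose_eq_transpose_of_trivial]
  have hUU : Uᵀ * U = 1 := by
    rw [← hstar]; exact Unitary.coe_star_mul_self hAherm.eigenvectorUnitary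
  have hUU' : U * Uᵀ = 1 := by
    rw [← hstar]; exact Unitary.coe_mul_star_self hAherm.eigenvectorUnitary
  have hspec : A = U * diagonal d * Uᵀ := by
    rw [← hstar]
    simpa using hAherm.spectral_theorem
  -- eigenvalues are nonzero
  have hrankA : A.rank = m := by rw [hAdef, rank_transpose_mul_self, hrank]
  have hnz : ∀ i, d i ≠ 0 := by
    intro i
    have hcard := hAherm.rank_eq_card_non_zero_eigs
    rw [hrankA] at hcard
    rw [Fintype.card_subtype] at hcard
    have heq : Finset.univ.filter (fun i => d i ≠ 0) = Finset.univ := by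
      apply Finset.eq_of_subset_of_card_le (Finset.filter_subset _ _)
      rw [← hcard]; simp
    have : i ∈ Finset.univ.filter (fun i => d i ≠ 0) := by rw [heq]; exact Finset.mem_univ i
    exact (Finset.mem_filter.mp this).2
  -- eigenvalues are positive
  have hpos : ∀ i, 0 < d i := fun i =>
    lt_of_le_of_ne ((posSemidef_conjTranspose_mul_self S).eigenvalues_nonneg i) (Ne.symm (hnz i))
  -- the inverse of A
  have hAinv : A⁻¹ = U * diagonal (fun i => (d i)⁻¹) * Uᵀ := by
    apply inv_eq_right_inv
    calc A * (U * diagonal (fun i => (d i)⁻¹) * Uᵀ)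
        = U * (diagonal d * ((Uᵀ * U) * diagonal (fun i => (d i)⁻¹))) * Uᵀ := by
          rw [hspec]; simp only [Matrix.mul_assoc]
      _ = U * Uᵀ := by
          rw [hUU, Matrix.one_mul, diagonal_mul_diagonal]
          have : (fun i => d i * (d i)⁻¹) = fun _ => (1 : ℝ) := by
            funext i; exact mul_inv_cancel₀ (hnz i)
          rw [this, diagonal_one, Matrix.mul_one]
      _ = 1 := hUU'
  set T : Matrix (Fin n) (Fin m) ℝ := S * U with hT
  have hTT : Tᵀ * T = diagonal d := by
    calc Tᵀ * T = Uᵀ * (Sᵀ * S) * U := by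
          rw [hT, Matrix.transpose_mul, Matrix.mul_assoc, Matrix.mul_assoc, Matrix.mul_assoc]
      _ = (Uᵀ * U) * diagonal d * (Uᵀ * U) := by
          rw [← hAdef, hspec]
          simp only [Matrix.mul_assoc]
      _ = diagonal d := by rw [hUU, Matrix.one_mul, Matrix.mul_one]
  -- norm of T *ᵥ w
  have hTnorm : ∀ w : Fin m → ℝ, ∑ r, ((T *ᵥ w) r) ^ 2 = ∑ i, d i * (w i) ^ 2 := by
    intro w
    have h1 : ∑ r, ((T *ᵥ w) r) ^ 2 = (T *ᵥ w) ⬝ᵥ (T *ᵥ w) := by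
      simp [dotProduct, sq]
    have h2 : (T *ᵥ w) ⬝ᵥ (T *ᵥ w) = ((T *ᵥ w) ᵥ* T) ⬝ᵥ w := dotProduct_mulVec _ _ _
    have h3 : (T *ᵥ w) ᵥ* T = (Tᵀ * T) *ᵥ w := by
      rw [← mulVec_transpose, mulVec_mulVec]
    rw [h1, h2, h3, hTT]
    simp [dotProduct, mulVec_diagonal, sq]
    ring_nf
  set z : Fin m → ℝ := Tᵀ *ᵥ v with hz
  -- the difference matrix
  set e : Fin m → ℝ := fun i => (d i)⁻¹ - 1 with he
  have hdiff : S * A⁻¹ * Sᵀ - S * Sᵀ = T * diagonal e * Tᵀ := by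
    have h1 : diagonal e = diagonal (fun i => (d i)⁻¹) - 1 := by
      rw [← diagonal_one, diagonal_sub]
    have h2 : T * diagonal e * Tᵀ = S * (U * diagonal (fun i => (d i)⁻¹) * Uᵀ - U * Uᵀ) * Sᵀ := by
      rw [hT, h1, Matrix.transpose_mul]
      rw [Matrix.mul_sub, Matrix.mul_sub, Matrix.sub_mul, Matrix.sub_mul, Matrix.mul_one]
      simp only [Matrix.mul_assoc]
    rw [h2, ← hAinv, hUU', Matrix.mul_sub, Matrix.sub_mul, Matrix.mul_one]
  -- compute the squared LHS
  have hMv : (T * diagonal e * Tᵀ) *ᵥ v = T *ᵥ (fun i => e i * z i) := by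
    have hinner : diagonal e *ᵥ (Tᵀ *ᵥ v) = fun i => e i * z i :=
      funext fun i => mulVec_diagonal _ _ i
    rw [← mulVec_mulVec, ← mulVec_mulVec, hinner]
  set c2 : ℝ := ∑ i, (1 - d i) ^ 2 with hc2
  have hc2nonneg : 0 ≤ c2 := Finset.sum_nonneg fun i _ => sq_nonneg _
  set p : ℝ := ∑ i, (z i) ^ 2 / d i with hp
  have hLHS : ∑ r, (((T * diagonal e * Tᵀ) *ᵥ v) r) ^ 2
      = ∑ i, (1 - d i) ^ 2 * ((z i) ^ 2 / d i) := by
    rw [hMv, hTnorm]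
    refine Finset.sum_congr rfl fun i _ => ?_
    have hdne := hnz i
    simp only [he]
    field_simp
  -- p equals v ⬝ᵥ P v and also ‖P v‖²
  set P : Matrix (Fin n) (Fin n) ℝ := T * diagonal (fun i => (d i)⁻¹) * Tᵀ with hP
  have hPv : P *ᵥ v = T *ᵥ (fun i => (d i)⁻¹ * z i) := by
    have hinner : diagonal (fun i => (d i)⁻¹) *ᵥ (Tᵀ *ᵥ v) = fun i => (d i)⁻¹ * z i :=
      funext fun i => mulVec_diagonal _ _ i
    rw [hP, ← mulVec_mulVec, ← mulVec_mulVec, hinner]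
  have hp1 : ∑ r, ((P *ᵥ v) r) ^ 2 = p := by
    rw [hPv, hTnorm, hp]
    refine Finset.sum_congr rfl fun i _ => ?_
    have hdne := hnz i
    field_simp
  have hp2 : v ⬝ᵥ (P *ᵥ v) = p := by
    rw [hP, ← mulVec_mulVec, ← mulVec_mulVec, dotProduct_mulVec, ← mulVec_transpose, ← hz]
    have : diagonal (fun i => (d i)⁻¹) *ᵥ (Tᵀ *ᵥ v) = fun i => (d i)⁻¹ * z i := by
      funext i; rw [mulVec_diagonal, hz]
    rw [this, hp, dotProduct]
    refine Finset.sum_congr rfl fun i _ => ?_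
    have hdne := hnz i
    field_simp
  set V : ℝ := ∑ r, (v r) ^ 2 with hV
  have hVnonneg : 0 ≤ V := Finset.sum_nonneg fun i _ => sq_nonneg _
  have hpnonneg : 0 ≤ p :=
    Finset.sum_nonneg fun i _ => div_nonneg (sq_nonneg _) (hpos i).le
  -- Cauchy-Schwarz: p ≤ V
  have hpV : p ≤ V := by
    have hcs : (∑ r, v r * (P *ᵥ v) r) ^ 2 ≤ (∑ r, (v r) ^ 2) * ∑ r, ((P *ᵥ v) r) ^ 2 :=
      Finset.sum_mul_sq_le_sq_mul_sq _ _ _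
    rw [hp1] at hcs
    have : (∑ r, v r * (P *ᵥ v) r) = p := hp2
    rw [this] at hcs
    rcases eq_or_lt_of_le hpnonneg with h | h
    · rw [← h]; exact hVnonneg
    · nlinarith
  -- Frobenius norm computation
  have hfrob : ∑ i, ∑ j, (((1 : Matrix (Fin m) (Fin m) ℝ) - A) i j) ^ 2 = c2 := by
    have h1A : (1 : Matrix (Fin m) (Fin m) ℝ) - A = U * diagonal (fun i => 1 - d i) * Uᵀ := by
      have : diagonal (fun i => 1 - d i) = 1 - diagonal d := by
        rw [← diagonal_one, diagonal_sub]
      rw [this, Matrix.mul_sub, Matrix.sub_mul, Matrix.mul_one, hUU', hspec]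
    have htr : ∀ M : Matrix (Fin m) (Fin m) ℝ,
        ∑ i, ∑ j, (M i j) ^ 2 = (Mᵀ * M).trace := by
      intro M
      rw [Matrix.trace]
      simp only [Matrix.diag, Matrix.mul_apply, Matrix.transpose_apply, sq]
      exact Finset.sum_comm
    rw [htr, h1A]
    have hMt : (U * diagonal (fun i => 1 - d i) * Uᵀ)ᵀ = U * diagonal (fun i => 1 - d i) * Uᵀ := by
      rw [Matrix.transpose_mul, Matrix.transpose_mul, Matrix.transpose_transpose,
        diagonal_transpose, Matrix.mul_assoc]
    rw [hMt]
    have : (U * diagonal (fun i => 1 - d i) * Uᵀ) * (U * diagonal (fun i => 1 - d i) * Uᵀ)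
        = U * diagonal (fun i => (1 - d i) ^ 2) * Uᵀ := by
      calc (U * diagonal (fun i => 1 - d i) * Uᵀ) * (U * diagonal (fun i => 1 - d i) * Uᵀ)
          = U * (diagonal (fun i => 1 - d i) * ((Uᵀ * U) * diagonal (fun i => 1 - d i))) * Uᵀ := by
            simp only [Matrix.mul_assoc]
        _ = U * diagonal (fun i => (1 - d i) ^ 2) * Uᵀ := by
            rw [hUU, Matrix.one_mul, diagonal_mul_diagonal]
            simp only [Matrix.mul_assoc, sq]
    rw [this, Matrix.trace_mul_comm, ← Matrix.mul_assoc, hUU, Matrix.one_mul,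
      Matrix.trace_diagonal]
  -- assemble
  have hdiffv : ∀ r, ((S * A⁻¹ * Sᵀ) *ᵥ v) r - ((S * Sᵀ) *ᵥ v) r
      = ((T * diagonal e * Tᵀ) *ᵥ v) r := by
    intro r
    rw [← hdiff, Matrix.sub_mulVec]
    rfl
  have hgoal_sq : ∑ r, (((S * A⁻¹ * Sᵀ) *ᵥ v) r - ((S * Sᵀ) *ᵥ v) r) ^ 2 ≤ c2 * V := by
    calc ∑ r, (((S * A⁻¹ * Sᵀ) *ᵥ v) r - ((S * Sᵀ) *ᵥ v) r) ^ 2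
        = ∑ i, (1 - d i) ^ 2 * ((z i) ^ 2 / d i) := by
          rw [← hLHS]
          exact Finset.sum_congr rfl fun r _ => by rw [hdiffv r]
      _ ≤ ∑ i, c2 * ((z i) ^ 2 / d i) := by
          refine Finset.sum_le_sum fun i _ => ?_
          refine mul_le_mul_of_nonneg_right ?_ (div_nonneg (sq_nonneg _) (hpos i).le)
          exact Finset.single_le_sum (fun k _ => sq_nonneg (1 - d k)) (Finset.mem_univ i)
      _ = c2 * p := by rw [← Finset.mul_sum]
      _ ≤ c2 * V := mul_le_mul_of_nonneg_left hpV hc2nonneg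
  rw [frobeniusNorm, hfrob, ← Real.sqrt_mul hc2nonneg]
  exact Real.sqrt_le_sqrt hgoal_sq
end

section
/- Fix reals μ > 0, ω_p > 0, ε, γ, and define for ω > 0: s₁₂²(ω) = (3e^ε ω² + 2ω ω_p + e^ε ω μ − ω_p μ)² / (4(3e^{2ε}ω² + 4e^ε ω ω_p + 3ω_p²)(ω² + ωμ + μ²)), s₁₃²(ω) = (3e^{ε+γ} ω² + 2e^γ ω ω_p + e^ε ω μ − ω_p μ)² / (4(3e^{2ε}ω² + 4e^ε ω ω_p + 3ω_p²)(e^{2γ}ω² + e^γ ωμ + μ²)), and s₂₃²(ω) = e^{2γ} ω⁴ / (4(ω² + ωμ + μ²)(e^{2γ}ω² + e^γ ωμ + μ²)). Then the sum Σ(ω) = s₁₂²(ω) + s₁₃²(ω) + s₂₃²(ω) satisfies lim_{ω→∞} Σ(ω) = 7/4 and lim_{ω→0⁺} Σ(ω) = 1/6. -/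
set_option maxHeartbeats 1000000

open Filter Topology

/-- The sum `Σ(ω) = s₁₂²(ω) + s₁₃²(ω) + s₂₃²(ω)` of squared normalized inner products of
the retained Laplacian columns of the Hopfield–Ninio network in the energetic regime. -/
noncomputable def hopfieldSigma (μ ωp ε γ : ℝ) (ω : ℝ) : ℝ :=
  (3 * Real.exp ε * ω ^ 2 + 2 * ω * ωp + Real.exp ε * ω * μ - ωp * μ) ^ 2 /
      (4 * (3 * Real.exp (2 * ε) * ω ^ 2 + 4 * Real.exp ε * ω * ωp + 3 * ωp ^ 2) *
        (ω ^ 2 + ω * μ + μ ^ 2))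
    + (3 * Real.exp (ε + γ) * ω ^ 2 + 2 * Real.exp γ * ω * ωp + Real.exp ε * ω * μ - ωp * μ) ^ 2 /
      (4 * (3 * Real.exp (2 * ε) * ω ^ 2 + 4 * Real.exp ε * ω * ωp + 3 * ωp ^ 2) *
        (Real.exp (2 * γ) * ω ^ 2 + Real.exp γ * ω * μ + μ ^ 2))
    + Real.exp (2 * γ) * ω ^ 4 /
      (4 * (ω ^ 2 + ω * μ + μ ^ 2) * (Real.exp (2 * γ) * ω ^ 2 + Real.exp γ * ω * μ + μ ^ 2))

/-- Auxiliary: `Σ` rewritten in the variable `x = 1/ω`. -/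
noncomputable def hopfieldSigmaAux (μ ωp ε γ : ℝ) (x : ℝ) : ℝ :=
  (3 * Real.exp ε + 2 * ωp * x + Real.exp ε * μ * x - ωp * μ * x ^ 2) ^ 2 /
      (4 * (3 * Real.exp (2 * ε) + 4 * Real.exp ε * ωp * x + 3 * ωp ^ 2 * x ^ 2) *
        (1 + μ * x + μ ^ 2 * x ^ 2))
    + (3 * Real.exp (ε + γ) + 2 * Real.exp γ * ωp * x + Real.exp ε * μ * x - ωp * μ * x ^ 2) ^ 2 /
      (4 * (3 * Real.exp (2 * ε) + 4 * Real.exp ε * ωp * x + 3 * ωp ^ 2 * x ^ 2) *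
        (Real.exp (2 * γ) + Real.exp γ * μ * x + μ ^ 2 * x ^ 2))
    + Real.exp (2 * γ) /
      (4 * (1 + μ * x + μ ^ 2 * x ^ 2) * (Real.exp (2 * γ) + Real.exp γ * μ * x + μ ^ 2 * x ^ 2))

/-- In the energetic regime of the Hopfield–Ninio scheme, the sum `Σ(ω)` of the three
squared normalized inner products tends to `7/4` as `ω → ∞` and to `1/6` as `ω → 0⁺`. -/
theorem hopfieldSigma_limits (μ ωp ε γ : ℝ) (hμ : 0 < μ) (hωp : 0 < ωp) :
    Tendsto (hopfieldSigma μ ωp ε γ) atTop (𝓝 (7 / 4))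
      ∧ Tendsto (hopfieldSigma μ ωp ε γ) (𝓝[>] 0) (𝓝 (1 / 6)) := by
  have hE := Real.exp_pos (2 * ε)
  have hG := Real.exp_pos (2 * γ)
  have hε := Real.exp_pos ε
  have hγ := Real.exp_pos γ
  constructor
  · -- ω → ∞ : use the substitution x = ω⁻¹
    have hcont : ContinuousAt (hopfieldSigmaAux μ ωp ε γ) 0 := by
      unfold hopfieldSigmaAux
      refine (((ContinuousAt.div ?_ ?_ ?_).add (ContinuousAt.div ?_ ?_ ?_)).add
        (ContinuousAt.div ?_ ?_ ?_)) <;> first | positivity | fun_prop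
    have hval : hopfieldSigmaAux μ ωp ε γ 0 = 7 / 4 := by
      unfold hopfieldSigmaAux
      have e2 : Real.exp (2 * ε) = Real.exp ε * Real.exp ε := by
        rw [← Real.exp_add]; ring_nf
      have g2 : Real.exp (2 * γ) = Real.exp γ * Real.exp γ := by
        rw [← Real.exp_add]; ring_nf
      have eg : Real.exp (ε + γ) = Real.exp ε * Real.exp γ := Real.exp_add ε γ
      rw [e2, g2, eg]
      norm_num
      field_simp
      ring
    have htend : Tendsto (fun ω : ℝ => hopfieldSigmaAux μ ωp ε γ ω⁻¹) atTop (𝓝 (7 / 4)) := by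
      rw [← hval]
      exact hcont.tendsto.comp tendsto_inv_atTop_zero
    refine htend.congr' ?_
    filter_upwards [eventually_gt_atTop (0 : ℝ)] with ω hω
    have hω' : ω ≠ 0 := hω.ne'
    unfold hopfieldSigma hopfieldSigmaAux
    have d1 : (3 * Real.exp (2 * ε) * ω ^ 2 + 4 * Real.exp ε * ω * ωp + 3 * ωp ^ 2) ≠ 0 := by
      positivity
    have d2 : (ω ^ 2 + ω * μ + μ ^ 2) ≠ 0 := by positivity
    have d3 : (Real.exp (2 * γ) * ω ^ 2 + Real.exp γ * ω * μ + μ ^ 2) ≠ 0 := by positivity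
    congr 1
    · congr 1
      · field_simp
      · field_simp
    · field_simp
  · -- ω → 0⁺ : continuity at 0
    have hcont : ContinuousAt (hopfieldSigma μ ωp ε γ) 0 := by
      unfold hopfieldSigma
      refine (((ContinuousAt.div ?_ ?_ ?_).add (ContinuousAt.div ?_ ?_ ?_)).add
        (ContinuousAt.div ?_ ?_ ?_)) <;> first | positivity | fun_prop
    have hval : hopfieldSigma μ ωp ε γ 0 = 1 / 6 := by
      unfold hopfieldSigma
      have hμ' := hμ.ne'
      have hωp' := hωp.ne'
      norm_num
      field_simp
      ring
    rw [← hval]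
    exact hcont.tendsto.mono_left nhdsWithin_le_nhds
end

section
/- Fix reals μ > 0 and γ. The function s₂₃²(ω) = e^{2γ} ω⁴ / (4 (ω² + ωμ + μ²)(e^{2γ} ω² + e^γ ωμ + μ²)) is strictly increasing in ω on (0, ∞). -/
/-- The squared normalized inner product
`s₂₃²(ω) = e^{2γ} ω⁴ / (4 (ω² + ωμ + μ²)(e^{2γ} ω² + e^γ ωμ + μ²))` of the two
product-adjacent Laplacian columns of the Hopfield–Ninio network (energetic regime,
drive rate `μ > 0`, binding-energy difference `γ`) is strictly increasing in `ω` on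
`(0, ∞)`. -/
theorem s23_strictMonoOn (μ γ : ℝ) (hμ : 0 < μ) :
    StrictMonoOn
      (fun ω : ℝ => Real.exp (2 * γ) * ω ^ 4 /
        (4 * (ω ^ 2 + ω * μ + μ ^ 2) *
          (Real.exp (2 * γ) * ω ^ 2 + Real.exp γ * ω * μ + μ ^ 2)))
      (Set.Ioi 0) := by
  intro a ha b hb hab
  simp only [Set.mem_Ioi] at ha hb
  have hE := Real.exp_pos (2 * γ)
  have he := Real.exp_pos γ
  have hDa : 0 < 4 * (a ^ 2 + a * μ + μ ^ 2) *
      (Real.exp (2 * γ) * a ^ 2 + Real.exp γ * a * μ + μ ^ 2) := by positivity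
  have hDb : 0 < 4 * (b ^ 2 + b * μ + μ ^ 2) *
      (Real.exp (2 * γ) * b ^ 2 + Real.exp γ * b * μ + μ ^ 2) := by positivity
  simp only
  rw [div_lt_div_iff₀ hDa hDb]
  have hba : 0 < b - a := sub_pos.mpr hab
  have key1 : 0 < μ * (b - a) * (a * b + μ * (a + b)) := by positivity
  have h1 : a ^ 2 * (b ^ 2 + b * μ + μ ^ 2) < b ^ 2 * (a ^ 2 + a * μ + μ ^ 2) := by
    nlinarith [key1]
  have key2 : 0 < μ * (b - a) * (Real.exp γ * (a * b) + μ * (a + b)) := by positivity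
  have h2 : a ^ 2 * (Real.exp (2 * γ) * b ^ 2 + Real.exp γ * b * μ + μ ^ 2) <
      b ^ 2 * (Real.exp (2 * γ) * a ^ 2 + Real.exp γ * a * μ + μ ^ 2) := by
    nlinarith [key2]
  have h3 := mul_lt_mul'' h1 h2 (by positivity) (by positivity)
  nlinarith [mul_lt_mul_of_pos_left h3 (by positivity : (0:ℝ) < 4 * Real.exp (2 * γ))]
end

section
/- Fix a real γ > 0 and a natural number N ≥ 1, and define the energetic-regime ladder error fraction ξ(η) = (1 + η)^N / (e^γ (1 + η e^γ)^N) for η ≥ 0. Then ξ is strictly decreasing on (0, ∞), ξ(η) > e^{−(N+1)γ} for every η ≥ 0, and lim_{η→∞} ξ(η) = e^{−(N+1)γ}. -/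
open Filter Topology

/-- The energetic-regime ladder error fraction `ξ(η) = (1+η)^N / (e^γ (1+η e^γ)^N)`
(with `η = d_R/f` the discard-to-forward rate ratio) for `γ > 0` and `N ≥ 1` is strictly
decreasing on `(0, ∞)`, satisfies `ξ(η) > e^{−(N+1)γ}` for every `η ≥ 0`, and tends to
`e^{−(N+1)γ}` as `η → ∞`. -/
theorem ladder_energetic_error (γ : ℝ) (hγ : 0 < γ) (N : ℕ) (hN : 1 ≤ N) :
    StrictAntiOn
        (fun η : ℝ => (1 + η) ^ N / (Real.exp γ * (1 + η * Real.exp γ) ^ N))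
        (Set.Ioi 0)
    ∧ (∀ η : ℝ, 0 ≤ η →
        Real.exp (-(((N : ℝ) + 1) * γ))
          < (1 + η) ^ N / (Real.exp γ * (1 + η * Real.exp γ) ^ N))
    ∧ Tendsto (fun η : ℝ => (1 + η) ^ N / (Real.exp γ * (1 + η * Real.exp γ) ^ N))
        atTop (𝓝 (Real.exp (-(((N : ℝ) + 1) * γ)))) := by
  have hE : 1 < Real.exp γ := by
    rw [show (1:ℝ) = Real.exp 0 by simp]
    exact Real.exp_lt_exp.mpr hγ
  have hE0 : 0 < Real.exp γ := Real.exp_pos γ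
  have hNne : N ≠ 0 := by omega
  refine ⟨?_, ?_, ?_⟩
  · intro a ha b hb hab
    simp only [Set.mem_Ioi] at ha hb
    have hda : 0 < 1 + a * Real.exp γ := by nlinarith
    have hdb : 0 < 1 + b * Real.exp γ := by nlinarith
    have h1a : (0:ℝ) < 1 + a := by linarith
    have h1b : (0:ℝ) < 1 + b := by linarith
    rw [div_lt_div_iff₀ (by positivity) (by positivity)]
    have hbase : (1 + b) * (1 + a * Real.exp γ) < (1 + a) * (1 + b * Real.exp γ) := by
      nlinarith
    have hpow : ((1 + b) * (1 + a * Real.exp γ)) ^ N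
        < ((1 + a) * (1 + b * Real.exp γ)) ^ N :=
      pow_lt_pow_left₀ hbase (by positivity) hNne
    rw [mul_pow, mul_pow] at hpow
    calc (1 + b) ^ N * (Real.exp γ * (1 + a * Real.exp γ) ^ N)
        = Real.exp γ * ((1 + b) ^ N * (1 + a * Real.exp γ) ^ N) := by ring
      _ < Real.exp γ * ((1 + a) ^ N * (1 + b * Real.exp γ) ^ N) := by
          exact (mul_lt_mul_iff_right₀ hE0).mpr hpow
      _ = (1 + a) ^ N * (Real.exp γ * (1 + b * Real.exp γ) ^ N) := by ring
  · intro η hη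
    have hd : 0 < 1 + η * Real.exp γ := by nlinarith
    rw [lt_div_iff₀ (by positivity)]
    have key : Real.exp (-γ) * (1 + η * Real.exp γ) < 1 + η := by
      have : Real.exp (-γ) * (1 + η * Real.exp γ) = Real.exp (-γ) + η := by
        rw [Real.exp_neg]; field_simp
      rw [this]
      have : Real.exp (-γ) < 1 := by
        rw [Real.exp_lt_one_iff]; linarith
      linarith
    have hpow : (Real.exp (-γ) * (1 + η * Real.exp γ)) ^ N < (1 + η) ^ N :=
      pow_lt_pow_left₀ key (by positivity) hNne
    rw [mul_pow] at hpow
    calc Real.exp (-(((N : ℝ) + 1) * γ)) * (Real.exp γ * (1 + η * Real.exp γ) ^ N)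
        = Real.exp (-γ) ^ N * (1 + η * Real.exp γ) ^ N := by
          have h := Real.exp_nat_mul (-γ) N
          rw [← mul_assoc, ← Real.exp_add, show -(((N:ℝ)+1)*γ) + γ = (N:ℝ)*(-γ) by ring, h]
      _ < (1 + η) ^ N := hpow
  · have hg : Tendsto (fun η : ℝ => (η⁻¹ + 1) / (η⁻¹ + Real.exp γ)) atTop
        (𝓝 ((0 + 1) / (0 + Real.exp γ))) := by
      apply Tendsto.div
      · exact tendsto_inv_atTop_zero.add_const 1
      · exact tendsto_inv_atTop_zero.add_const (Real.exp γ)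
      · positivity
    have h2 : Tendsto (fun η : ℝ =>
        Real.exp (-γ) * ((η⁻¹ + 1) / (η⁻¹ + Real.exp γ)) ^ N) atTop
        (𝓝 (Real.exp (-γ) * ((0 + 1) / (0 + Real.exp γ)) ^ N)) :=
      (hg.pow N).const_mul _
    have hval : Real.exp (-γ) * ((0 + 1) / (0 + Real.exp γ)) ^ N
        = Real.exp (-(((N : ℝ) + 1) * γ)) := by
      rw [zero_add, zero_add, one_div, ← Real.exp_neg, ← Real.exp_nat_mul,
        ← Real.exp_add]
      ring_nf
    rw [← hval]
    apply h2.congr'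
    filter_upwards [eventually_gt_atTop (0:ℝ)] with η hη
    have hd : 0 < 1 + η * Real.exp γ := by nlinarith
    have hηne : η ≠ 0 := ne_of_gt hη
    have : (η⁻¹ + 1) / (η⁻¹ + Real.exp γ) = (1 + η) / (1 + η * Real.exp γ) := by
      rw [div_eq_div_iff (by positivity) (by positivity)]
      field_simp
    rw [this, div_pow, Real.exp_neg, eq_div_iff (by positivity)]
    field_simp
end

section
/- Fix a real δ > 0 and a natural number α ≥ 1, and define the kinetic-regime ladder error fraction ξ(η, φ) = ((φ + 1)^α (1 + η e^δ)^α) / ((φ e^δ + 1)^α (1 + η)^α) for η ≥ 0, φ ≥ 0. Then ξ(η, φ) > e^{−αδ} for all η ≥ 0, φ ≥ 0, and lim_{φ→∞} ξ(0, φ) = e^{−αδ}; hence the infimum of ξ over η ≥ 0, φ ≥ 0 equals e^{−αδ}, approached in the limit η → 0, φ → ∞. -/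
open Filter Topology

/-- The kinetic-regime ladder error fraction
`ξ(η, φ) = (φ+1)^α (1+η e^δ)^α / ((φ e^δ + 1)^α (1+η)^α)`. -/
noncomputable def ladderKineticError (δ : ℝ) (α : ℕ) (η φ : ℝ) : ℝ :=
  ((φ + 1) ^ α * (1 + η * Real.exp δ) ^ α) /
    ((φ * Real.exp δ + 1) ^ α * (1 + η) ^ α)

/-- For `δ > 0` and `α ≥ 1`: `ξ(η, φ) > e^{−αδ}` for all `η ≥ 0`, `φ ≥ 0`;
`ξ(0, φ) → e^{−αδ}` as `φ → ∞`; hence the infimum of `ξ` over `η ≥ 0`, `φ ≥ 0`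
equals `e^{−αδ}`, approached in the limit `η → 0`, `φ → ∞`. -/
theorem ladder_kinetic_error (δ : ℝ) (hδ : 0 < δ) (α : ℕ) (hα : 1 ≤ α) :
    (∀ η φ : ℝ, 0 ≤ η → 0 ≤ φ →
        Real.exp (-((α : ℝ) * δ)) < ladderKineticError δ α η φ)
    ∧ Tendsto (fun φ : ℝ => ladderKineticError δ α 0 φ) atTop
        (𝓝 (Real.exp (-((α : ℝ) * δ))))
    ∧ IsGLB {x : ℝ | ∃ η ≥ (0 : ℝ), ∃ φ ≥ (0 : ℝ), x = ladderKineticError δ α η φ}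
        (Real.exp (-((α : ℝ) * δ))) := by
  set E := Real.exp δ with hE
  have hE1 : 1 < E := by
    show (1:ℝ) < Real.exp δ; rw [← Real.exp_zero]; exact Real.exp_lt_exp.mpr hδ
  have hE0 : 0 < E := lt_trans one_pos hE1
  have hexp : Real.exp (-((α : ℝ) * δ)) = (Real.exp (-δ)) ^ α := by
    rw [← Real.exp_nat_mul]; ring_nf
  have hexpE : Real.exp (-δ) = E⁻¹ := by
    rw [hE, Real.exp_neg]
  -- main strict inequality
  have hmain : ∀ η φ : ℝ, 0 ≤ η → 0 ≤ φ →
      Real.exp (-((α : ℝ) * δ)) < ladderKineticError δ α η φ := by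
    intro η φ hη hφ
    have hden1 : 0 < φ * E + 1 := by positivity
    have hden2 : 0 < 1 + η := by linarith
    have key : E⁻¹ * ((φ * E + 1) * (1 + η)) < (φ + 1) * (1 + η * E) := by
      rw [inv_mul_lt_iff₀ hE0]
      nlinarith [mul_nonneg hη hφ, mul_nonneg (mul_nonneg hη hφ) hE0.le,
        mul_pos hE0 hE0, sq_nonneg (E - 1)]
    have hr : E⁻¹ < ((φ + 1) * (1 + η * E)) / ((φ * E + 1) * (1 + η)) := by
      rw [lt_div_iff₀ (by positivity)]
      exact key
    have hr0 : 0 ≤ E⁻¹ := by positivity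
    have hpow : (E⁻¹) ^ α < (((φ + 1) * (1 + η * E)) / ((φ * E + 1) * (1 + η))) ^ α :=
      pow_lt_pow_left₀ hr hr0 (by omega)
    rw [hexp, hexpE]
    calc (E⁻¹) ^ α < (((φ + 1) * (1 + η * E)) / ((φ * E + 1) * (1 + η))) ^ α := hpow
      _ = ladderKineticError δ α η φ := by
          rw [div_pow, mul_pow, mul_pow]; rfl
  refine ⟨hmain, ?_, ?_⟩
  case _ =>
    -- tendsto
    have h1 : Tendsto (fun φ : ℝ => (φ + 1) / (φ * E + 1)) atTop (𝓝 E⁻¹) := by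
      have heq : (fun φ : ℝ => (φ + 1) / (φ * E + 1)) =ᶠ[atTop]
          fun φ : ℝ => (1 + φ⁻¹) / (E + φ⁻¹) := by
        filter_upwards [eventually_gt_atTop (0 : ℝ)] with φ hφ
        field_simp
      have h2 : Tendsto (fun φ : ℝ => (1 + φ⁻¹) / (E + φ⁻¹)) atTop (𝓝 ((1 + 0) / (E + 0))) := by
        exact ((tendsto_const_nhds.add tendsto_inv_atTop_zero).div
          (tendsto_const_nhds.add tendsto_inv_atTop_zero) (by positivity))
      have : Tendsto (fun φ : ℝ => (1 + φ⁻¹) / (E + φ⁻¹)) atTop (𝓝 E⁻¹) := by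
        simpa [one_div] using h2
      exact Tendsto.congr' heq.symm this
    have h3 : Tendsto (fun φ : ℝ => ((φ + 1) / (φ * E + 1)) ^ α) atTop (𝓝 ((E⁻¹) ^ α)) :=
      h1.pow α
    have : Tendsto (fun φ : ℝ => ladderKineticError δ α 0 φ) atTop (𝓝 ((E⁻¹) ^ α)) := by
      refine h3.congr (fun φ => ?_)
      simp [ladderKineticError, div_pow, hE]
    rw [hexp, hexpE]
    exact this
  case _ =>
    constructor
    · rintro x ⟨η, hη, φ, hφ, rfl⟩
      exact (hmain η φ hη hφ).le
    · intro b hb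
      -- b ≤ ξ(0, φ) for all φ ≥ 0, take limit
      have htend : Tendsto (fun φ : ℝ => ladderKineticError δ α 0 φ) atTop
          (𝓝 (Real.exp (-((α : ℝ) * δ)))) := by
        have h1 : Tendsto (fun φ : ℝ => (φ + 1) / (φ * E + 1)) atTop (𝓝 E⁻¹) := by
          have heq : (fun φ : ℝ => (φ + 1) / (φ * E + 1)) =ᶠ[atTop]
              fun φ : ℝ => (1 + φ⁻¹) / (E + φ⁻¹) := by
            filter_upwards [eventually_gt_atTop (0 : ℝ)] with φ hφ
            field_simp
          have h2 : Tendsto (fun φ : ℝ => (1 + φ⁻¹) / (E + φ⁻¹)) atTop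
              (𝓝 ((1 + 0) / (E + 0))) :=
            ((tendsto_const_nhds.add tendsto_inv_atTop_zero).div
              (tendsto_const_nhds.add tendsto_inv_atTop_zero) (by positivity))
          have : Tendsto (fun φ : ℝ => (1 + φ⁻¹) / (E + φ⁻¹)) atTop (𝓝 E⁻¹) := by
            simpa [one_div] using h2
          exact Tendsto.congr' heq.symm this
        have h3 := h1.pow α
        rw [hexp, hexpE]
        refine h3.congr (fun φ => ?_)
        simp [ladderKineticError, div_pow, hE]
      refine ge_of_tendsto htend ?_
      filter_upwards [eventually_ge_atTop (0 : ℝ)] with φ hφ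
      exact hb ⟨0, le_refl 0, φ, hφ, rfl⟩
end
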